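/- Let (X,d,m) be a doubling, strongly m-rectifiable metric measure space with dimensional decomposition (A_k)_{k∈ℕ}. Let ε_n ↓ 0 and for each n let 𝒜_n = {(U_i^{k,n}, φ_i^{k,n})}_{k,i} be an ε_n-atlas on X all of whose domains U_i^{k,n} are compact. Then there exists a sequence r_n ↓ 0 of positive reals such that for m-a.e. x ∈ X the following holds, where k is the (unique) index with x ∈ A_k: for every R > ε > 0 there exists n₀ ∈ ℕ such that for every n ≥ n₀, denoting by i the index with x ∈ U_i^{k,n}, for every map P : X → U_i^{k,n} satisfying d(y, P(y)) ≤ 2·dist(y, U_i^{k,n}) for all y ∈ X, the map Φ(y) := (φ_i^{k,n}(P(y)) − φ_i^{k,n}(x))/r_n satisfies: (a) | |Φ(y₀) − Φ(y₁)|_{ℝ^k} − d(y₀,y₁)/r_n | ≤ ε for all y₀, y₁ ∈ B_{r_n R}(x); and (b) for every w ∈ ℝ^k with |w| < R − ε there exists y ∈ B_{r_n R}(x) with |Φ(y) − w| ≤ ε. -/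

import Mathlib

open MeasureTheory Metric Set Filter Topology

section Defs

variable {X : Type*} [MetricSpace X] [MeasurableSpace X]

/-- `φ` is `L`-biLipschitz with its image on `U`:
`L⁻¹·d(x,y) ≤ d(φ x, φ y) ≤ L·d(x,y)` on `U`. -/
def BiLipschitzOnWith (L : ℝ) {k : ℕ} (φ : X → EuclideanSpace ℝ (Fin k)) (U : Set X) : Prop :=
  ∀ x ∈ U, ∀ y ∈ U, dist x y ≤ L * dist (φ x) (φ y) ∧ dist (φ x) (φ y) ≤ L * dist x y

/-- `(U i)` is an `m`-partition of `Ak`: pairwise disjoint Borel subsets of `Ak` covering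
`m`-almost all of `Ak`. -/
def IsMPartition (m : Measure X) (Ak : Set X) (U : ℕ → Set X) : Prop :=
  (∀ i, MeasurableSet (U i)) ∧ (∀ i, U i ⊆ Ak) ∧ Pairwise (Function.onFun Disjoint U) ∧
    m (Ak \ ⋃ i, U i) = 0

/-- The measure condition of a chart: `C⁻¹·L^k|_{φ(U)} ≤ φ_*(m|_U) ≤ C·L^k|_{φ(U)}`,
expressed by evaluation on Borel sets. -/
def ChartMeasureBound (m : Measure X) (C : NNReal) {k : ℕ} (U : Set X)
    (φ : X → EuclideanSpace ℝ (Fin k)) : Prop :=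
  ∀ B : Set (EuclideanSpace ℝ (Fin k)), MeasurableSet B →
    volume (B ∩ φ '' U) ≤ (C : ENNReal) * m (U ∩ φ ⁻¹' B) ∧
    m (U ∩ φ ⁻¹' B) ≤ (C : ENNReal) * volume (B ∩ φ '' U)

/-- An `ε`-atlas for the dimensional decomposition `A`. -/
def IsEpsAtlas (m : Measure X) (A : ℕ → Set X) (ε : ℝ)
    (U : ℕ → ℕ → Set X) (φ : (k : ℕ) → ℕ → X → EuclideanSpace ℝ (Fin k)) : Prop :=
  ∀ k, IsMPartition m (A k) (U k) ∧
    ∀ i, BiLipschitzOnWith (1 + ε) (φ k i) (U k i) ∧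
      ∃ C : NNReal, 1 ≤ C ∧ ChartMeasureBound m C (U k i) (φ k i)

/-- `(X,d,m)` is strongly `m`-rectifiable with dimensional decomposition `A`. -/
def StronglyRectifiable (m : Measure X) (A : ℕ → Set X) : Prop :=
  (∀ k, MeasurableSet (A k)) ∧ Pairwise (Function.onFun Disjoint A) ∧ (⋃ k, A k) = Set.univ ∧
  ∀ ε > (0 : ℝ), ∀ k : ℕ, ∃ (U : ℕ → Set X) (φ : ℕ → X → EuclideanSpace ℝ (Fin k)),
    IsMPartition m (A k) U ∧ ∀ i, BiLipschitzOnWith (1 + ε) (φ i) (U i) ∧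
      ∀ B : Set (EuclideanSpace ℝ (Fin k)), MeasurableSet B → volume B = 0 →
        m (U i ∩ φ i ⁻¹' B) = 0

end Defs


section Aux

variable {Y : Type*} [MetricSpace Y]

/-- The set of points `x` near which (at scale `s`) there is a point `y` whose distance to `V`
exceeds `δ * dist x y`. -/
def BadAt (V : Set Y) (δ s : ℝ) : Set Y :=
  {x | ∃ y, dist x y < s ∧ δ * dist x y < Metric.infDist y V}

lemma isOpen_badAt (V : Set Y) (δ s : ℝ) : IsOpen (BadAt V δ s) := by
  have h : BadAt V δ s =
      ⋃ y, ({x | dist x y < s} ∩ {x | δ * dist x y < Metric.infDist y V}) := by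
    ext x; simp [BadAt]
  rw [h]
  refine isOpen_iUnion fun y => IsOpen.inter ?_ ?_
  · exact isOpen_lt (continuous_id.dist continuous_const) continuous_const
  · exact isOpen_lt (continuous_const.mul (continuous_id.dist continuous_const)) continuous_const

lemma badAt_mono (V : Set Y) (δ : ℝ) {s s' : ℝ} (h : s ≤ s') : BadAt V δ s ⊆ BadAt V δ s' :=
  fun _ ⟨y, h1, h2⟩ => ⟨y, h1.trans_le h, h2⟩

lemma infDist_le_of_not_badAt {V : Set Y} {δ s : ℝ} {x : Y} (h : x ∉ BadAt V δ s) {y : Y}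
    (hy : dist x y < s) : Metric.infDist y V ≤ δ * dist x y := by
  by_contra h'
  exact h ⟨y, hy, lt_of_not_ge h'⟩

/-- Density lemma: almost every point of `V` is eventually not in the bad sets. -/
lemma null_iInter_badAt [MeasurableSpace Y] [BorelSpace Y] [SecondCountableTopology Y]
    (μ : Measure Y) [IsUnifLocDoublingMeasure μ] [IsLocallyFiniteMeasure μ]
    {V : Set Y} (hV : MeasurableSet V) {δ : ℝ} (hδ : 0 < δ) :
    μ (V ∩ ⋂ l : ℕ, BadAt V δ (1 / (l + 1))) = 0 := by
  have hT : MeasurableSet (⋂ l : ℕ, BadAt V δ (1 / (l + 1))) :=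
    MeasurableSet.iInter fun l => (isOpen_badAt _ _ _).measurableSet
  rw [Set.inter_comm, ← Measure.restrict_apply hT, measure_eq_zero_iff_ae_notMem]
  filter_upwards [IsUnifLocDoublingMeasure.ae_tendsto_measure_inter_div μ V (2 / δ),
    ae_restrict_mem hV] with x hx hxV hxT
  rw [Set.mem_iInter] at hxT
  choose y hy1 hy2 using hxT
  have hdist : ∀ l : ℕ, 0 < dist x (y l) := by
    intro l
    rcases lt_or_ge 0 (dist x (y l)) with h | h
    · exact h
    · have h0 : dist x (y l) = 0 := le_antisymm h dist_nonneg
      have : Metric.infDist (y l) V ≤ dist (y l) x := Metric.infDist_le_dist_of_mem hxV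
      rw [dist_comm] at this
      have := (hy2 l).trans_le this
      rw [h0] at this
      simp at this
  set ρ : ℕ → ℝ := fun l => δ * dist x (y l) / 2 with hρ
  have hρpos : ∀ l, 0 < ρ l := fun l => by have := hdist l; positivity
  have hρlim : Tendsto ρ atTop (𝓝[>] 0) := by
    refine tendsto_nhdsWithin_iff.2 ⟨?_, Eventually.of_forall fun l => hρpos l⟩
    have hle : ∀ l : ℕ, ρ l ≤ δ / 2 * (1 / (l + 1)) := by
      intro l
      have := (hy1 l).le
      rw [hρ]
      calc δ * dist x (y l) / 2 ≤ δ * (1 / (l + 1)) / 2 := by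
            gcongr
          _ = δ / 2 * (1 / (l + 1)) := by ring
    have h2 : Tendsto (fun l : ℕ => δ / 2 * (1 / (l + 1 : ℝ))) atTop (𝓝 0) := by
      simpa using tendsto_one_div_add_atTop_nhds_zero_nat.const_mul (δ / 2)
    exact squeeze_zero (fun l => (hρpos l).le) hle h2
  have hmem : ∀ᶠ l in atTop, x ∈ closedBall (y l) (2 / δ * ρ l) := by
    refine Eventually.of_forall fun l => ?_
    rw [mem_closedBall, dist_comm]
    have : 2 / δ * ρ l = dist x (y l) := by
      rw [hρ]; field_simp
    rw [this, dist_comm]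
  have htend := hx y ρ hρlim hmem
  have hempty : ∀ l, V ∩ closedBall (y l) (ρ l) = ∅ := by
    intro l
    rw [Set.eq_empty_iff_forall_notMem]
    rintro z ⟨hzV, hz⟩
    have h1 : Metric.infDist (y l) V ≤ ρ l := by
      refine le_trans (Metric.infDist_le_dist_of_mem hzV) ?_
      rwa [dist_comm, ← mem_closedBall]
    have h2 : ρ l < δ * dist x (y l) := by
      rw [hρ]
      have := hdist l
      nlinarith
    exact absurd (hy2 l) (not_lt.2 (h1.trans h2.le))
  have hzero : (fun l => μ (V ∩ closedBall (y l) (ρ l)) / μ (closedBall (y l) (ρ l))) =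
      fun _ => (0 : ENNReal) := by
    funext l
    rw [hempty l]
    simp
  rw [hzero] at htend
  exact zero_ne_one (tendsto_nhds_unique tendsto_const_nhds htend)

end Aux

section Arith


private lemma arith_a {e δ rn R εx D dP d01 : ℝ} (he0 : 0 ≤ e) (he1 : e ≤ 1)
    (he2 : e ≤ εx / (8 * (R + 1))) (hδ0 : 0 < δ) (hδ : δ ≤ εx / (32 * (R + 1)))
    (hεx : 0 < εx) (hR : εx < R) (hrn : 0 < rn)
    (hD0 : 0 ≤ D) (hdP0 : 0 ≤ dP) (hd010 : 0 ≤ d01)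
    (hDub : D ≤ (1 + e) * dP) (hDlb : dP ≤ (1 + e) * D)
    (hdPub : dP ≤ d01 + 4 * (δ * (rn * R))) (hdPlb : d01 ≤ dP + 4 * (δ * (rn * R)))
    (hd01 : d01 ≤ 2 * (rn * R)) : |D - d01| ≤ εx * rn := by
  have hR0 : 0 < R := hεx.trans hR
  have hB : 0 < rn * R := mul_pos hrn hR0
  have hR1 : 0 < R + 1 := by linarith
  have hu1 : e * (rn * R) ≤ εx / (8 * (R + 1)) * (rn * R) :=
    mul_le_mul_of_nonneg_right he2 hB.le
  have hu2 : δ * (rn * R) ≤ εx / (32 * (R + 1)) * (rn * R) :=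
    mul_le_mul_of_nonneg_right hδ hB.le
  have hkey : εx / (8 * (R + 1)) * (rn * R) ≤ εx * rn / 8 := by
    rw [div_mul_eq_mul_div, div_le_div_iff₀ (by positivity) (by norm_num)]
    nlinarith [mul_pos hεx hrn]
  have hkey2 : εx / (32 * (R + 1)) * (rn * R) ≤ εx * rn / 32 := by
    rw [div_mul_eq_mul_div, div_le_div_iff₀ (by positivity) (by norm_num)]
    nlinarith [mul_pos hεx hrn]
  have hed01 : e * d01 ≤ 2 * (e * (rn * R)) := by nlinarith
  have hDall : D ≤ d01 + e * d01 + (1 + e) * (4 * (δ * (rn * R))) := by nlinarith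
  have hDb : D ≤ 2 * (2 * (rn * R) + 4 * (δ * (rn * R))) := by nlinarith
  have heD : e * D ≤ 4 * (e * (rn * R)) + 8 * (δ * (rn * R)) := by nlinarith
  have h8 : (1 + e) * (4 * (δ * (rn * R))) ≤ 8 * (δ * (rn * R)) := by nlinarith
  rw [abs_le]
  constructor
  · linarith
  · linarith

private lemma arith_b1 {e δ rn R εx dφ : ℝ} (he0 : 0 ≤ e)
    (he2 : e ≤ εx / (8 * (R + 1))) (hδ0 : 0 < δ) (hδ : δ ≤ εx / (32 * (R + 1)))
    (hεx : 0 < εx) (hR : εx < R) (hrn : 0 < rn) (hdφ0 : 0 ≤ dφ)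
    (hφ : dφ < rn * (R - εx) + δ * (rn * R)) : (1 + e) * dφ < rn * R := by
  have hR0 : 0 < R := hεx.trans hR
  have hB : 0 < rn * R := mul_pos hrn hR0
  have hR1 : 0 < R + 1 := by linarith
  have hu1 : e * (rn * R) ≤ εx / (8 * (R + 1)) * (rn * R) :=
    mul_le_mul_of_nonneg_right he2 hB.le
  have hu2 : δ * (rn * R) ≤ εx / (32 * (R + 1)) * (rn * R) :=
    mul_le_mul_of_nonneg_right hδ hB.le
  have hkey : εx / (8 * (R + 1)) * (rn * R) ≤ εx * rn / 8 := by
    rw [div_mul_eq_mul_div, div_le_div_iff₀ (by positivity) (by norm_num)]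
    nlinarith [mul_pos hεx hrn]
  have hkey2 : εx / (32 * (R + 1)) * (rn * R) ≤ εx * rn / 32 := by
    rw [div_mul_eq_mul_div, div_le_div_iff₀ (by positivity) (by norm_num)]
    nlinarith [mul_pos hεx hrn]
  have he1' : e ≤ 1 := by
    have : εx / (8 * (R + 1)) ≤ 1 := by
      rw [div_le_one (by positivity)]; nlinarith
    linarith
  have hφ' : dφ ≤ rn * R - εx * rn + εx * rn / 32 := by nlinarith
  have hdφB : dφ ≤ rn * R := by nlinarith [mul_pos hεx hrn]
  have hedφ : e * dφ ≤ e * (rn * R) := mul_le_mul_of_nonneg_left hdφB he0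
  nlinarith [mul_pos hεx hrn]

private lemma arith_b2 {δ R εx : ℝ} (hδ0 : 0 < δ) (hδ : δ ≤ εx / (32 * (R + 1)))
    (hεx : 0 < εx) (hR : εx < R) : δ * R ≤ εx := by
  have hR0 : 0 < R := hεx.trans hR
  have hR1 : 0 < R + 1 := by linarith
  have : δ * R ≤ εx / (32 * (R + 1)) * R := mul_le_mul_of_nonneg_right hδ hR0.le
  refine this.trans ?_
  rw [div_mul_eq_mul_div, div_le_iff₀ (by positivity)]
  nlinarith

end Arith

/-- Let `(X,d,m)` be doubling and strongly `m`-rectifiable with dimensional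
decomposition `(A_k)`, and let `𝒜_n = {(U_i^{k,n}, φ_i^{k,n})}` be `ε_n`-atlases with compact
domains, `ε_n ↓ 0`. Then there is `r_n ↓ 0` such that for `m`-a.e. `x` (with `x ∈ A_k`):
for all `R > ε > 0` there is `n₀` such that for `n ≥ n₀`, for the chart domain containing `x`
and any quasi-projection `P` onto it, the rescaled map
`Φ(y) = (φ_i^{k,n}(P y) − φ_i^{k,n}(x))/r_n` is an `ε`-quasi isometry from `B_{r_n R}(x)`
to `B_R(0) ⊆ ℝ^k`. -/
theorem stmt11 {X : Type*} [MetricSpace X] [CompleteSpace X] [SecondCountableTopology X]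
    [MeasurableSpace X] [BorelSpace X] (m : Measure X)
    (hdoub : ∃ C : NNReal, 0 < C ∧ ∀ (x : X) (ρ : ℝ), 0 < ρ →
      0 < m (ball x (2 * ρ)) ∧ m (ball x (2 * ρ)) ≤ (C : ENNReal) * m (ball x ρ) ∧
        m (ball x ρ) < ⊤)
    (A : ℕ → Set X) (hA : StronglyRectifiable m A)
    (ε : ℕ → ℝ) (hεpos : ∀ n, 0 < ε n) (hεanti : Antitone ε)
    (hεlim : Tendsto ε atTop (𝓝 0))
    (U : ℕ → ℕ → ℕ → Set X) (φ : ℕ → (k : ℕ) → ℕ → X → EuclideanSpace ℝ (Fin k))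
    (hatlas : ∀ n, IsEpsAtlas m A (ε n) (U n) (φ n))
    (hcomp : ∀ n k i, IsCompact (U n k i)) :
    ∃ r : ℕ → ℝ, (∀ n, 0 < r n) ∧ Antitone r ∧ Tendsto r atTop (𝓝 0) ∧
      ∀ᵐ x ∂m, ∀ k, x ∈ A k → ∀ R εx : ℝ, 0 < εx → εx < R →
        ∃ n₀ : ℕ, ∀ n ≥ n₀, ∀ i, x ∈ U n k i →
          ∀ P : X → X, (∀ y, P y ∈ U n k i) →
            (∀ y, dist y (P y) ≤ 2 * infDist y (U n k i)) →
            (∀ y₀ ∈ ball x (r n * R), ∀ y₁ ∈ ball x (r n * R),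
              |‖(r n)⁻¹ • (φ n k i (P y₀) - φ n k i x) -
                  (r n)⁻¹ • (φ n k i (P y₁) - φ n k i x)‖ - dist y₀ y₁ / r n| ≤ εx) ∧
            (∀ w : EuclideanSpace ℝ (Fin k), ‖w‖ < R - εx →
              ∃ y ∈ ball x (r n * R),
                ‖(r n)⁻¹ • (φ n k i (P y) - φ n k i x) - w‖ ≤ εx) := by
  classical
  obtain ⟨C₀, hC₀pos, hC₀⟩ := hdoub
  haveI hloc : IsLocallyFiniteMeasure m :=
    ⟨fun x => ⟨ball x 1, ball_mem_nhds x one_pos, (hC₀ x 1 one_pos).2.2⟩⟩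
  haveI hdub : IsUnifLocDoublingMeasure m := by
    refine ⟨⟨C₀ * C₀, ?_⟩⟩
    filter_upwards [self_mem_nhdsWithin] with ρ hρ x
    have hρ0 : (0 : ℝ) < ρ := hρ
    calc m (closedBall x (2 * ρ)) ≤ m (ball x (2 * (2 * ρ))) :=
          measure_mono (closedBall_subset_ball (by linarith))
      _ ≤ C₀ * m (ball x (2 * ρ)) := (hC₀ x (2 * ρ) (by linarith)).2.1
      _ ≤ C₀ * (C₀ * m (ball x ρ)) := by gcongr; exact (hC₀ x ρ hρ0).2.1
      _ = ((C₀ * C₀ : NNReal) : ENNReal) * m (ball x ρ) := by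
          rw [ENNReal.coe_mul, mul_assoc]
      _ ≤ ((C₀ * C₀ : NNReal) : ENNReal) * m (closedBall x ρ) := by
          gcongr; exact ball_subset_closedBall
  have hmono1 : ∀ a b : ℕ, a ≤ b → (1 : ℝ) / (b + 1) ≤ 1 / (a + 1) := by
    intro a b hab
    apply one_div_le_one_div_of_le (by positivity)
    have : (a : ℝ) ≤ b := by exact_mod_cast hab
    linarith
  rcases isEmpty_or_nonempty X with hX | hXne
  · refine ⟨fun n => 1 / (n + 1), fun n => by positivity, ?_, ?_, ?_⟩
    · intro a b hab; exact hmono1 a b hab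
    · exact tendsto_one_div_add_atTop_nhds_zero_nat
    · exact Eventually.of_forall fun x => isEmptyElim x
  obtain ⟨z⟩ := hXne
  -- basic chart facts
  have hUmeas : ∀ n k i, MeasurableSet (U n k i) := fun n k i => (hatlas n k).1.1 i
  have hbl : ∀ n k i, BiLipschitzOnWith (1 + ε n) (φ n k i) (U n k i) :=
    fun n k i => ((hatlas n k).2 i).1
  have hcont : ∀ n k i, ContinuousOn (φ n k i) (U n k i) := by
    intro n k i
    refine (LipschitzOnWith.of_dist_le_mul
      (K := ⟨1 + ε n, by linarith [hεpos n]⟩) ?_).continuousOn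
    intro a ha b hb
    exact (hbl n k i a ha b hb).2
  have hWmeas : ∀ n k i, MeasurableSet (φ n k i '' U n k i) := fun n k i =>
    ((hcomp n k i).image_of_continuousOn (hcont n k i)).measurableSet
  -- the bad sets
  set bad : ℕ → ℕ → ℕ → ℕ → ℕ → Set X := fun n k i q l =>
    U n k i ∩ (BadAt (U n k i) (1 / (q + 1)) (1 / (l + 1)) ∪
      (φ n k i) ⁻¹' BadAt (φ n k i '' U n k i) (1 / (q + 1)) (1 / (l + 1))) with hbaddef
  have hbadsub : ∀ n k i q l, bad n k i q l ⊆ U n k i := fun n k i q l => inter_subset_left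
  have hpremeas : ∀ n k i (O : Set (EuclideanSpace ℝ (Fin k))), IsOpen O →
      MeasurableSet (U n k i ∩ (φ n k i) ⁻¹' O) := by
    intro n k i O hO
    obtain ⟨u, hu, heq⟩ := (_root_.continuousOn_iff'.1 (hcont n k i)) O hO
    have : U n k i ∩ (φ n k i) ⁻¹' O = U n k i ∩ u := by
      rw [Set.inter_comm _ u, ← heq, Set.inter_comm]
    rw [this]
    exact (hUmeas n k i).inter hu.measurableSet
  have hbadmeas : ∀ n k i q l, MeasurableSet (bad n k i q l) := by
    intro n k i q l
    rw [hbaddef]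
    simp only [Set.inter_union_distrib_left]
    exact ((hUmeas n k i).inter (isOpen_badAt _ _ _).measurableSet).union
      (hpremeas n k i _ (isOpen_badAt _ _ _))
  have hbadanti : ∀ n k i q, Antitone (fun l => bad n k i q l) := by
    intro n k i q l l' hll'
    refine Set.inter_subset_inter_right _ (Set.union_subset_union ?_ ?_)
    · exact badAt_mono _ _ (hmono1 l l' hll')
    · exact Set.preimage_mono (badAt_mono _ _ (hmono1 l l' hll'))
  have hδq : ∀ q : ℕ, (0 : ℝ) < 1 / (q + 1) := fun q => by positivity
  -- null sets from density
  have hnull1 : ∀ (n k i q : ℕ), m (U n k i ∩ ⋂ l : ℕ,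
      BadAt (U n k i) (1 / (q + 1)) (1 / (l + 1))) = 0 :=
    fun n k i q => null_iInter_badAt m (hUmeas n k i) (hδq q)
  have hnull2 : ∀ (n k i q : ℕ), m (U n k i ∩ (φ n k i) ⁻¹' (⋂ l : ℕ,
      BadAt (φ n k i '' U n k i) (1 / (q + 1)) (1 / (l + 1)))) = 0 := by
    intro n k i q
    have hvol : volume ((φ n k i '' U n k i) ∩ ⋂ l : ℕ,
        BadAt (φ n k i '' U n k i) (1 / (q + 1)) (1 / (l + 1))) = 0 :=
      null_iInter_badAt volume (hWmeas n k i) (hδq q)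
    obtain ⟨C, hC1, hCB⟩ := ((hatlas n k).2 i).2
    have hBmeas : MeasurableSet (⋂ l : ℕ,
        BadAt (φ n k i '' U n k i) (1 / (q + 1)) (1 / ((l : ℝ) + 1))) :=
      MeasurableSet.iInter fun l => (isOpen_badAt _ _ _).measurableSet
    have h2 := (hCB _ hBmeas).2
    rw [Set.inter_comm] at hvol
    rw [hvol, mul_zero] at h2
    exact le_antisymm h2 zero_le
  -- inclusion of the intersection of unions into a null set
  have hincl : ∀ n k (q : ℕ), (⋂ l : ℕ, ⋃ i, bad n k i q l) ⊆
      ⋃ i, ((U n k i ∩ ⋂ l : ℕ, BadAt (U n k i) (1 / (q + 1)) (1 / (l + 1))) ∪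
        (U n k i ∩ (φ n k i) ⁻¹' (⋂ l : ℕ,
          BadAt (φ n k i '' U n k i) (1 / (q + 1)) (1 / (l + 1))))) := by
    intro n k q x hx
    rw [Set.mem_iInter] at hx
    obtain ⟨i₀, hi₀⟩ := Set.mem_iUnion.1 (hx 0)
    have hxi : ∀ l, x ∈ bad n k i₀ q l := by
      intro l
      obtain ⟨i, hi⟩ := Set.mem_iUnion.1 (hx l)
      rcases eq_or_ne i i₀ with rfl | hne
      · exact hi
      · exact absurd (hbadsub n k i₀ q 0 hi₀)
          (Set.disjoint_left.1 ((hatlas n k).1.2.2.1 hne) (hbadsub n k i q l hi))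
    refine Set.mem_iUnion.2 ⟨i₀, ?_⟩
    by_cases hA : ∀ l : ℕ, x ∈ BadAt (U n k i₀) (1 / (q + 1)) (1 / (l + 1))
    · exact Or.inl ⟨hi₀.1, Set.mem_iInter.2 hA⟩
    · push_neg at hA
      obtain ⟨l₀, hl₀⟩ := hA
      refine Or.inr ⟨hi₀.1, ?_⟩
      rw [Set.mem_preimage, Set.mem_iInter]
      intro l
      rcases (hxi (max l l₀)).2 with hB | hE
      · exact absurd (badAt_mono _ _ (hmono1 l₀ (max l l₀) (le_max_right _ _)) hB) hl₀
      · exact badAt_mono _ _ (hmono1 l (max l l₀) (le_max_left _ _)) hE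
  have hInterNull : ∀ n k (q p : ℕ),
      m (ball z (p + 1) ∩ ⋂ l : ℕ, ⋃ i, bad n k i q l) = 0 := by
    intro n k q p
    refine measure_mono_null (Set.inter_subset_right.trans (hincl n k q)) ?_
    exact measure_iUnion_null fun i => measure_union_null (hnull1 n k i q) (hnull2 n k i q)
  have hballfin : ∀ p : ℕ, m (ball z (p + 1)) < ⊤ := fun p => (hC₀ z (p + 1) (by positivity)).2.2
  have htendsto : ∀ n k (q p : ℕ),
      Tendsto (fun l => m (ball z (p + 1) ∩ ⋃ i, bad n k i q l)) atTop (𝓝 0) := by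
    intro n k q p
    have h1 : Tendsto (fun l => m (ball z (p + 1) ∩ ⋃ i, bad n k i q l)) atTop
        (𝓝 (m (⋂ l : ℕ, (ball z (p + 1) ∩ ⋃ i, bad n k i q l)))) := by
      refine tendsto_measure_iInter_atTop (fun l => ?_) (fun l l' hll' => ?_) ⟨0, ?_⟩
      · exact (measurableSet_ball.inter
          (MeasurableSet.iUnion fun i => hbadmeas n k i q l)).nullMeasurableSet
      · exact Set.inter_subset_inter_right _
          (Set.iUnion_mono fun i => hbadanti n k i q hll')
      · exact ((measure_mono Set.inter_subset_left).trans_lt (hballfin p)).ne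
    have h2 : (⋂ l : ℕ, (ball z (p + 1) ∩ ⋃ i, bad n k i q l)) =
        ball z (p + 1) ∩ ⋂ l : ℕ, ⋃ i, bad n k i q l := by
      rw [Set.inter_iInter]
    rw [h2, hInterNull n k q p] at h1
    exact h1
  -- choice of scales
  have hHtend : ∀ n : ℕ, Tendsto (fun l => ∑ k ∈ Finset.range (n + 1), ∑ q ∈
      Finset.range (n + 1), ∑ p ∈ Finset.range (n + 1),
        m (ball z (p + 1) ∩ ⋃ i, bad n k i q l)) atTop (𝓝 0) := by
    intro n
    have := tendsto_finset_sum (Finset.range (n + 1)) (fun k _ =>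
      tendsto_finset_sum (Finset.range (n + 1)) (fun q _ =>
        tendsto_finset_sum (Finset.range (n + 1)) (fun p _ => htendsto n k q p)))
    simpa using this
  have hLex : ∀ n : ℕ, ∃ L : ℕ, ∑ k ∈ Finset.range (n + 1), ∑ q ∈
      Finset.range (n + 1), ∑ p ∈ Finset.range (n + 1),
        m (ball z (p + 1) ∩ ⋃ i, bad n k i q L) < (2 : ENNReal)⁻¹ ^ n := by
    intro n
    have hpos : (0 : ENNReal) < (2 : ENNReal)⁻¹ ^ n := ENNReal.pow_pos (ENNReal.inv_pos.mpr (by norm_num)) n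
    exact ((hHtend n).eventually_lt_const hpos).exists
  choose L hL using hLex
  -- the sequence r
  set t : ℕ → ℝ := fun n => min ((1 / (L n + 1)) / (n + 1)) (1 / (n + 1)) with htdef
  have htpos : ∀ n, 0 < t n := fun n => lt_min (by positivity) (by positivity)
  set r : ℕ → ℝ := fun n => Nat.rec (t 0) (fun n ih => min ih (t (n + 1))) n with hrdef
  have hrsucc : ∀ n, r (n + 1) = min (r n) (t (n + 1)) := fun n => rfl
  have hrpos : ∀ n, 0 < r n := by
    intro n
    induction n with
    | zero => exact htpos 0
    | succ n ih => rw [hrsucc]; exact lt_min ih (htpos (n + 1))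
  have hranti : Antitone r :=
    antitone_nat_of_succ_le fun n => by rw [hrsucc]; exact min_le_left _ _
  have hrle : ∀ n, r n ≤ t n := by
    intro n
    cases n with
    | zero => exact le_refl _
    | succ n => rw [hrsucc]; exact min_le_right _ _
  have hrlim : Tendsto r atTop (𝓝 0) := by
    refine squeeze_zero (fun n => (hrpos n).le) (fun n => (hrle n).trans (min_le_right _ _)) ?_
    exact tendsto_one_div_add_atTop_nhds_zero_nat
  have hrle' : ∀ n, r n ≤ 1 / ((L n : ℝ) + 1) / ((n : ℝ) + 1) :=
    fun n => (hrle n).trans (min_le_left _ _)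
  clear hrsucc hrdef htdef htpos hrle
  clear_value r t
  clear t
  refine ⟨r, hrpos, hranti, hrlim, ?_⟩
  -- Borel-Cantelli
  set F : ℕ → Set X := fun n => ⋃ k ∈ Finset.range (n + 1), ⋃ q ∈ Finset.range (n + 1),
    ⋃ i, bad n k i q (L n) with hFdef
  have hFbound : ∀ p n : ℕ, p ≤ n → m (F n ∩ ball z (p + 1)) ≤ (2 : ENNReal)⁻¹ ^ n := by
    intro p n hpn
    have h1 : m (F n ∩ ball z (p + 1)) ≤ ∑ k ∈ Finset.range (n + 1), ∑ q ∈
        Finset.range (n + 1), m (ball z (p + 1) ∩ ⋃ i, bad n k i q (L n)) := by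
      simp only [hFdef, Set.iUnion_inter]
      refine (measure_biUnion_finset_le _ _).trans (Finset.sum_le_sum fun k _ => ?_)
      refine (measure_biUnion_finset_le _ _).trans (Finset.sum_le_sum fun q _ => ?_)
      refine le_of_eq (congrArg m ?_)
      rw [← Set.iUnion_inter, Set.inter_comm]
    refine h1.trans ?_
    refine le_trans (Finset.sum_le_sum fun k _ => Finset.sum_le_sum fun q _ => ?_) (hL n).le
    apply Finset.single_le_sum (f := fun p' : ℕ => m (ball z ((p' : ℝ) + 1) ∩ ⋃ i, bad n k i q (L n)))
      (fun _ _ => zero_le) (Finset.mem_range.2 (Nat.lt_succ_of_le hpn))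
  have hFsum : ∀ p : ℕ, (∑' n : ℕ, m (F n ∩ ball z (p + 1))) ≠ ⊤ := by
    intro p
    rw [← Summable.sum_add_tsum_nat_add' (f := fun n => m (F n ∩ ball z ((p:ℝ) + 1))) (k := p)
      ENNReal.summable]
    refine ENNReal.add_ne_top.2 ⟨?_, ?_⟩
    · refine (ENNReal.sum_lt_top.mpr fun n _ => ?_).ne
      exact lt_of_le_of_lt (measure_mono Set.inter_subset_right) (hballfin p)
    · have hle : ∀ i : ℕ, m (F (i + p) ∩ ball z (p + 1)) ≤ (2 : ENNReal)⁻¹ ^ (i + p) :=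
        fun i => hFbound p (i + p) (Nat.le_add_left p i)
      refine ne_top_of_le_ne_top ?_ (ENNReal.tsum_le_tsum hle)
      have h2 : (∑' i : ℕ, (2 : ENNReal)⁻¹ ^ (i + p)) ≤ ∑' i : ℕ, (2 : ENNReal)⁻¹ ^ i := by
        refine ENNReal.tsum_le_tsum fun i => ?_
        rw [pow_add]
        exact mul_le_of_le_one_right' (pow_le_one' (ENNReal.inv_le_one.mpr one_le_two) p)
      refine ne_top_of_le_ne_top ?_ h2
      rw [ENNReal.tsum_geometric]
      simp [ENNReal.one_sub_inv_two]
  have hae : ∀ᵐ x ∂m, ∀ p : ℕ, {n : ℕ | x ∈ F n ∩ ball z (p + 1)}.Finite :=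
    ae_all_iff.2 fun p => ae_finite_setOf_mem (hFsum p)
  filter_upwards [hae] with x hx
  intro k hxk R εx hεxpos hεxR
  have hRpos : (0 : ℝ) < R := hεxpos.trans hεxR
  -- a ball around the base point containing x
  have hxball : x ∈ ball z ((⌈dist x z⌉₊ : ℝ) + 1) := by
    rw [mem_ball, dist_comm]
    exact lt_of_le_of_lt (Nat.le_ceil _) (by exact_mod_cast lt_add_one _)
  obtain ⟨N, hN⟩ := (hx ⌈dist x z⌉₊).bddAbove
  have hN₁ : ∀ n : ℕ, N + 1 ≤ n → x ∉ F n := by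
    intro n hn hF
    have : n ≤ N := hN ⟨hF, by rw [dist_comm] at hxball; rw [dist_comm]; exact hxball⟩
    omega
  obtain ⟨q, hq⟩ := exists_nat_one_div_lt (show (0 : ℝ) < εx / (32 * (R + 1)) by positivity)
  have hεev : ∀ᶠ n in atTop, ε n < min 1 (εx / (8 * (R + 1))) :=
    hεlim.eventually_lt_const (by positivity)
  obtain ⟨N₂, hN₂⟩ := eventually_atTop.1 hεev
  refine ⟨max (max (N + 1) N₂) (max (max k q) ⌈R⌉₊), fun n hn i hxU P hP1 hP2 => ?_⟩
  have hnN1 : N + 1 ≤ n := le_trans ((le_max_left _ _).trans (le_max_left _ _)) hn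
  have hnN2 : N₂ ≤ n := le_trans ((le_max_right _ _).trans (le_max_left _ _)) hn
  have hkn : k ≤ n := le_trans ((le_max_left _ _).trans ((le_max_left _ _).trans (le_max_right _ _))) hn
  have hqn : q ≤ n := le_trans ((le_max_right _ _).trans ((le_max_left _ _).trans (le_max_right _ _))) hn
  have hRn : R ≤ (n : ℝ) + 1 := by
    have h1 : (⌈R⌉₊ : ℕ) ≤ n := le_trans ((le_max_right _ _).trans (le_max_right _ _)) hn
    have h2 : (⌈R⌉₊ : ℝ) ≤ (n : ℝ) := by exact_mod_cast h1
    linarith [Nat.le_ceil R]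
  have hxF : x ∉ F n := hN₁ n hnN1
  have hxbad : x ∉ bad n k i q (L n) := by
    intro hbadmem
    refine hxF ?_
    rw [hFdef]
    exact Set.mem_biUnion (Finset.mem_range.2 (Nat.lt_succ_of_le hkn))
      (Set.mem_biUnion (Finset.mem_range.2 (Nat.lt_succ_of_le hqn))
        (Set.mem_iUnion.2 ⟨i, hbadmem⟩))
  set δ : ℝ := 1 / (q + 1) with hδdef
  have hδpos : (0 : ℝ) < δ := hδq q
  have hδlt : δ < εx / (32 * (R + 1)) := hq
  set sn : ℝ := 1 / ((L n : ℝ) + 1) with hsndef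
  have hsnpos : (0 : ℝ) < sn := by positivity
  have hGX : ∀ y : X, dist x y < sn → infDist y (U n k i) ≤ δ * dist x y := by
    intro y hy
    refine infDist_le_of_not_badAt (fun hmem => hxbad ⟨hxU, Or.inl hmem⟩) hy
  have hGE : ∀ w' : EuclideanSpace ℝ (Fin k), dist (φ n k i x) w' < sn →
      infDist w' (φ n k i '' U n k i) ≤ δ * dist (φ n k i x) w' := by
    intro w' hw'
    exact infDist_le_of_not_badAt (fun hmem => hxbad ⟨hxU, Or.inr hmem⟩) hw'
  have hrpos' : (0 : ℝ) < r n := hrpos n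
  have hrnsn : r n * R ≤ sn := by
    have h1 : r n ≤ sn / ((n : ℝ) + 1) := hrle' n
    calc r n * R ≤ (sn / ((n : ℝ) + 1)) * ((n : ℝ) + 1) :=
          mul_le_mul h1 hRn hRpos.le (by positivity)
      _ = sn := by field_simp
  have hεn : ε n < min 1 (εx / (8 * (R + 1))) := hN₂ n hnN2
  have hεn1 : ε n ≤ 1 := (lt_min_iff.1 hεn).1.le
  have hεn2 : ε n ≤ εx / (8 * (R + 1)) := (lt_min_iff.1 hεn).2.le
  have hεnpos : (0 : ℝ) ≤ ε n := (hεpos n).le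
  have hB : (0 : ℝ) < r n * R := by positivity
  constructor
  · -- part (a)
    intro y₀ hy₀ y₁ hy₁
    rw [mem_ball] at hy₀ hy₁
    have hd0 : dist x y₀ < r n * R := by rw [dist_comm]; exact hy₀
    have hd1 : dist x y₁ < r n * R := by rw [dist_comm]; exact hy₁
    have hi0 : infDist y₀ (U n k i) ≤ δ * (r n * R) :=
      (hGX y₀ (hd0.trans_le hrnsn)).trans (mul_le_mul_of_nonneg_left hd0.le hδpos.le)
    have hi1 : infDist y₁ (U n k i) ≤ δ * (r n * R) :=
      (hGX y₁ (hd1.trans_le hrnsn)).trans (mul_le_mul_of_nonneg_left hd1.le hδpos.le)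
    have hp0 : dist y₀ (P y₀) ≤ 2 * (δ * (r n * R)) := (hP2 y₀).trans (by linarith)
    have hp1 : dist y₁ (P y₁) ≤ 2 * (δ * (r n * R)) := (hP2 y₁).trans (by linarith)
    have hblP := hbl n k i (P y₀) (hP1 y₀) (P y₁) (hP1 y₁)
    have hDub : dist (φ n k i (P y₀)) (φ n k i (P y₁)) ≤ (1 + ε n) * dist (P y₀) (P y₁) :=
      hblP.2
    have hDlb : dist (P y₀) (P y₁) ≤ (1 + ε n) * dist (φ n k i (P y₀)) (φ n k i (P y₁)) :=
      hblP.1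
    have hdP_ub : dist (P y₀) (P y₁) ≤ dist y₀ y₁ + 4 * (δ * (r n * R)) := by
      have h4 := dist_triangle4 (P y₀) y₀ y₁ (P y₁)
      have e0 : dist (P y₀) y₀ = dist y₀ (P y₀) := dist_comm _ _
      have e1 : dist y₁ (P y₁) = dist y₁ (P y₁) := rfl
      linarith
    have hdP_lb : dist y₀ y₁ ≤ dist (P y₀) (P y₁) + 4 * (δ * (r n * R)) := by
      have h4 := dist_triangle4 y₀ (P y₀) (P y₁) y₁
      have e0 : dist (P y₁) y₁ = dist y₁ (P y₁) := dist_comm _ _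
      linarith
    have hd01 : dist y₀ y₁ ≤ 2 * (r n * R) := by
      have h3 := dist_triangle y₀ x y₁
      have e0 : dist y₀ x = dist x y₀ := dist_comm _ _
      linarith
    have hkey : (r n)⁻¹ • (φ n k i (P y₀) - φ n k i x) -
        (r n)⁻¹ • (φ n k i (P y₁) - φ n k i x) =
        (r n)⁻¹ • (φ n k i (P y₀) - φ n k i (P y₁)) := by
      rw [← smul_sub, sub_sub_sub_cancel_right]
    rw [hkey, norm_smul, Real.norm_eq_abs, abs_of_pos (inv_pos.2 hrpos'), ← dist_eq_norm]
    have habs : |(r n)⁻¹ * dist (φ n k i (P y₀)) (φ n k i (P y₁)) - dist y₀ y₁ / r n| =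
        |dist (φ n k i (P y₀)) (φ n k i (P y₁)) - dist y₀ y₁| / r n := by
      rw [div_eq_inv_mul, ← mul_sub, abs_mul, abs_of_pos (inv_pos.2 hrpos'), inv_mul_eq_div]
    rw [habs, div_le_iff₀ hrpos']
    exact arith_a hεnpos hεn1 hεn2 hδpos hδlt.le hεxpos hεxR hrpos'
      dist_nonneg dist_nonneg dist_nonneg hDub hDlb hdP_ub hdP_lb hd01
  · -- part (b)
    intro w hw
    have hWne : (φ n k i '' U n k i).Nonempty := ⟨_, Set.mem_image_of_mem _ hxU⟩
    have hwnn : (0 : ℝ) ≤ ‖w‖ := norm_nonneg w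
    set z' : EuclideanSpace ℝ (Fin k) := φ n k i x + r n • w with hz'def
    have hdz : dist (φ n k i x) z' = r n * ‖w‖ := by
      rw [hz'def, dist_eq_norm]
      simp [norm_smul, abs_of_pos hrpos']
    have h1 : dist (φ n k i x) z' < r n * (R - εx) := by
      rw [hdz]
      exact mul_lt_mul_of_pos_left hw hrpos'
    have h1' : dist (φ n k i x) z' < r n * R :=
      h1.trans_le (mul_le_mul_of_nonneg_left (by linarith) hrpos'.le)
    have hinf : infDist z' (φ n k i '' U n k i) < δ * (r n * R) := by
      refine lt_of_le_of_lt (hGE z' (h1'.trans_le hrnsn)) ?_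
      exact mul_lt_mul_of_pos_left
        (h1.trans_le (mul_le_mul_of_nonneg_left (by linarith) hrpos'.le)) hδpos
    obtain ⟨w', hw'mem, hw'lt⟩ := (infDist_lt_iff hWne).1 hinf
    obtain ⟨y, hyU, hyw⟩ := hw'mem
    have hPy : P y = y := by
      have h0 : infDist y (U n k i) = 0 := infDist_zero_of_mem hyU
      have h2 := hP2 y
      rw [h0, mul_zero] at h2
      exact (dist_le_zero.1 (le_antisymm h2 dist_nonneg).le).symm
    have h2 : dist z' (φ n k i y) < δ * (r n * R) := by rw [hyw]; exact hw'lt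
    refine ⟨y, ?_, ?_⟩
    · rw [mem_ball, dist_comm]
      have hφd : dist (φ n k i x) (φ n k i y) < r n * (R - εx) + δ * (r n * R) := by
        have h3 := dist_triangle (φ n k i x) z' (φ n k i y)
        linarith
      have hxy := (hbl n k i x hxU y hyU).1
      calc dist x y ≤ (1 + ε n) * dist (φ n k i x) (φ n k i y) := hxy
        _ < r n * R := arith_b1 hεnpos hεn2 hδpos hδlt.le hεxpos hεxR hrpos' dist_nonneg hφd
    · rw [hPy]
      have hkey2 : (r n)⁻¹ • (φ n k i y - φ n k i x) - w = (r n)⁻¹ • (φ n k i y - z') := by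
      
        have e1 : φ n k i y - z' = (φ n k i y - φ n k i x) - r n • w := by
          rw [hz'def]; abel
        have e4 : (r n)⁻¹ • ((φ n k i y - φ n k i x) - r n • w) =
            (r n)⁻¹ • (φ n k i y - φ n k i x) - (r n)⁻¹ • (r n • w) := smul_sub _ _ _
        have e5 : (r n)⁻¹ • (r n • w) = w := by
          rw [smul_smul, inv_mul_cancel₀ hrpos'.ne', one_smul]
        rw [e1, e4, e5]
      rw [hkey2, norm_smul, Real.norm_eq_abs, abs_of_pos (inv_pos.2 hrpos')]
      have e2 : ‖φ n k i y - z'‖ = dist z' (φ n k i y) := by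
        rw [dist_eq_norm, norm_sub_rev]
      rw [e2]
      have h4 : (r n)⁻¹ * dist z' (φ n k i y) ≤ (r n)⁻¹ * (δ * (r n * R)) := by
        exact mul_le_mul_of_nonneg_left h2.le (by positivity)
      refine h4.trans ?_
      have e3 : (r n)⁻¹ * (δ * (r n * R)) = δ * R := by field_simp
      rw [e3]
      exact arith_b2 hδpos hδlt.le hεxpos hεxR
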